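/- Let p ∈ (1, 2) and let f₁, f₂ ∈ L_p(μ) with ‖f₁‖_{L_p}, ‖f₂‖_{L_p} ≤ r. Then ‖f₁ - f₂‖_{L_p}² ≤ ((2r)^{2-p}/(p-1)) · ∫ (g_p∘f₁ - g_p∘f₂)·(f₁ - f₂) dμ, where g_p(x) = sign(x)|x|^{p-1}. -/

import Mathlib

open MeasureTheory

lemma myrpow_subadd {x y q : ℝ} (hx : 0 ≤ x) (hy : 0 ≤ y) (hq0 : 0 ≤ q) (hq1 : q ≤ 1) :
    (x + y) ^ q ≤ x ^ q + y ^ q := by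
  lift x to NNReal using hx
  lift y to NNReal using hy
  exact_mod_cast NNReal.rpow_add_le_add_rpow x y hq0 hq1

lemma myrpow_two {x y q : ℝ} (hx : 0 ≤ x) (hy : 0 ≤ y) (hq : 1 ≤ q) :
    (x + y) ^ q ≤ 2 ^ (q - 1) * (x ^ q + y ^ q) := by
  lift x to NNReal using hx
  lift y to NNReal using hy
  exact_mod_cast NNReal.rpow_add_le_mul_rpow_add_rpow x y hq

lemma gval {p : ℝ} (hp : 1 < p) {t : ℝ} (ht : 0 ≤ t) :
    Real.sign t * |t| ^ (p - 1) = t ^ (p - 1) := by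
  rcases ht.eq_or_lt with h | h
  · rw [← h, Real.sign_zero, abs_zero, Real.zero_rpow (by linarith), mul_zero]
  · rw [Real.sign_of_pos h, abs_of_pos h, one_mul]

lemma gval_neg {p : ℝ} (hp : 1 < p) {t : ℝ} (ht : t ≤ 0) :
    Real.sign t * |t| ^ (p - 1) = -(-t) ^ (p - 1) := by
  rcases ht.lt_or_eq with h | h
  · rw [Real.sign_of_neg h, abs_of_neg h, neg_one_mul]
  · rw [h, Real.sign_zero, abs_zero, Real.zero_rpow (by linarith), mul_zero, neg_zero,
      Real.zero_rpow (by linarith), neg_zero]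

lemma sublemA {p : ℝ} (hp1 : 1 < p) (hp2 : p < 2) {y x : ℝ} (hy : 0 ≤ y) (hxy : y < x) :
    (p - 1) * (x + y) ^ (p - 2) * (x - y) ≤ x ^ (p - 1) - y ^ (p - 1) := by
  have hx : 0 < x := lt_of_le_of_lt hy hxy
  obtain ⟨c, hc, hceq⟩ := exists_hasDerivAt_eq_slope (fun t : ℝ => t ^ (p - 1))
    (fun t => (p - 1) * t ^ (p - 2)) hxy
    (fun t _ => (Real.continuousAt_rpow_const t (p - 1)
      (Or.inr (by linarith))).continuousWithinAt)
    (fun t ht => by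
      have h0 : t ≠ 0 := ne_of_gt (lt_of_le_of_lt hy ht.1)
      have := Real.hasDerivAt_rpow_const (x := t) (p := p - 1) (Or.inl h0)
      have e : p - 1 - 1 = p - 2 := by ring
      rw [e] at this
      exact this)
  have hc0 : 0 < c := lt_of_le_of_lt hy hc.1
  have hcx : c ≤ x + y := by have := hc.2; linarith
  have hmono : (x + y) ^ (p - 2) ≤ c ^ (p - 2) :=
    Real.rpow_le_rpow_of_nonpos hc0 hcx (by linarith)
  rw [eq_div_iff (by linarith : x - y ≠ 0)] at hceq
  calc (p - 1) * (x + y) ^ (p - 2) * (x - y)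
      ≤ (p - 1) * c ^ (p - 2) * (x - y) := by
        have h1 : (0:ℝ) ≤ (p - 1) * (x - y) := by nlinarith
        nlinarith [mul_le_mul_of_nonneg_right hmono h1]
    _ = x ^ (p - 1) - y ^ (p - 1) := hceq

lemma key_le {p : ℝ} (hp1 : 1 < p) (hp2 : p < 2) {a b : ℝ} (hba : b ≤ a) :
    (p - 1) * ((|a| + |b|) ^ (p - 2) * (a - b) ^ 2) ≤
      (Real.sign a * |a| ^ (p - 1) - Real.sign b * |b| ^ (p - 1)) * (a - b) := by
  rcases hba.eq_or_lt with h | hlt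
  · subst h; simp
  have hab : (0:ℝ) ≤ a - b := by linarith
  by_cases hb : 0 ≤ b
  · have ha : 0 < a := lt_of_le_of_lt hb hlt
    rw [gval hp1 ha.le, gval hp1 hb, abs_of_pos ha, abs_of_nonneg hb]
    have h := sublemA hp1 hp2 hb hlt
    calc (p - 1) * ((a + b) ^ (p - 2) * (a - b) ^ 2)
        = ((p - 1) * (a + b) ^ (p - 2) * (a - b)) * (a - b) := by ring
      _ ≤ (a ^ (p - 1) - b ^ (p - 1)) * (a - b) := mul_le_mul_of_nonneg_right h hab
  · by_cases ha : a ≤ 0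
    · rw [gval_neg hp1 ha, gval_neg hp1 (by linarith : b ≤ 0),
        abs_of_nonpos ha, abs_of_nonpos (by linarith : b ≤ 0)]
      have h := sublemA hp1 hp2 (neg_nonneg.2 ha) (by linarith : -a < -b)
      calc (p - 1) * ((-a + -b) ^ (p - 2) * (a - b) ^ 2)
          = ((p - 1) * (-b + -a) ^ (p - 2) * (-b - -a)) * (a - b) := by ring
        _ ≤ ((-b) ^ (p - 1) - (-a) ^ (p - 1)) * (a - b) :=
            mul_le_mul_of_nonneg_right h hab
        _ = (-(-a) ^ (p - 1) - -(-b) ^ (p - 1)) * (a - b) := by ring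
    · push_neg at hb ha
      rw [gval hp1 ha.le, gval_neg hp1 hb.le, abs_of_pos ha, abs_of_neg hb]
      have hs : (0:ℝ) < a + -b := by linarith
      have hfac : (a + -b) ^ (p - 2) * (a + -b) = (a + -b) ^ (p - 1) := by
        have : (a + -b) ^ (p - 1) = (a + -b) ^ (p - 2 + 1) := by ring_nf
        rw [this, Real.rpow_add_one (ne_of_gt hs)]
      have hsub : (a + -b) ^ (p - 1) ≤ a ^ (p - 1) + (-b) ^ (p - 1) :=
        myrpow_subadd ha.le (by linarith) (by linarith) (by linarith)
      have hle : (p - 1) * (a + -b) ^ (p - 1) ≤ a ^ (p - 1) + (-b) ^ (p - 1) :=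
        calc (p - 1) * (a + -b) ^ (p - 1) ≤ 1 * (a + -b) ^ (p - 1) :=
              mul_le_mul_of_nonneg_right (by linarith) (Real.rpow_nonneg hs.le _)
          _ = (a + -b) ^ (p - 1) := one_mul _
          _ ≤ a ^ (p - 1) + (-b) ^ (p - 1) := hsub
      calc (p - 1) * ((a + -b) ^ (p - 2) * (a - b) ^ 2)
          = ((p - 1) * ((a + -b) ^ (p - 2) * (a + -b))) * (a - b) := by ring
        _ = ((p - 1) * (a + -b) ^ (p - 1)) * (a - b) := by rw [hfac]
        _ ≤ (a ^ (p - 1) + (-b) ^ (p - 1)) * (a - b) := mul_le_mul_of_nonneg_right hle hab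
        _ = (a ^ (p - 1) - -(-b) ^ (p - 1)) * (a - b) := by ring

lemma key {p : ℝ} (hp1 : 1 < p) (hp2 : p < 2) (a b : ℝ) :
    (p - 1) * ((|a| + |b|) ^ (p - 2) * (a - b) ^ 2) ≤
      (Real.sign a * |a| ^ (p - 1) - Real.sign b * |b| ^ (p - 1)) * (a - b) := by
  rcases le_total b a with h | h
  · exact key_le hp1 hp2 h
  · have H := key_le hp1 hp2 h
    have e1 : (Real.sign a * |a| ^ (p - 1) - Real.sign b * |b| ^ (p - 1)) * (a - b)
        = (Real.sign b * |b| ^ (p - 1) - Real.sign a * |a| ^ (p - 1)) * (b - a) := by ring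
    have e2 : (|a| + |b|) ^ (p - 2) * (a - b) ^ 2
        = (|b| + |a|) ^ (p - 2) * (b - a) ^ 2 := by rw [add_comm]; ring_nf
    rw [e1, e2]
    exact H


/-- For `p ∈ (1,2)` and `f₁, f₂ ∈ L_p(μ)` with `‖f₁‖_{L_p}, ‖f₂‖_{L_p} ≤ r`:
`‖f₁ - f₂‖_{L_p}² ≤ ((2r)^{2-p}/(p-1)) ∫ (g_p∘f₁ - g_p∘f₂)(f₁ - f₂) dμ`,
where `g_p(x) = sign(x)|x|^{p-1}`. -/
theorem Lp_uniform_convexity_small_p {X : Type*} [MeasurableSpace X] (μ : Measure X)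
    (p : ℝ) (hp1 : 1 < p) (hp2 : p < 2) (r : ℝ)
    (f₁ f₂ : X → ℝ) (hm1 : Measurable f₁) (hm2 : Measurable f₂)
    (hi1 : Integrable (fun x => |f₁ x| ^ p) μ)
    (hi2 : Integrable (fun x => |f₂ x| ^ p) μ)
    (hr1 : (∫ x, |f₁ x| ^ p ∂μ) ^ (1 / p) ≤ r)
    (hr2 : (∫ x, |f₂ x| ^ p ∂μ) ^ (1 / p) ≤ r)
    (hiprod : Integrable (fun x =>
      (Real.sign (f₁ x) * |f₁ x| ^ (p - 1) - Real.sign (f₂ x) * |f₂ x| ^ (p - 1)) *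
        (f₁ x - f₂ x)) μ) :
    ((∫ x, |f₁ x - f₂ x| ^ p ∂μ) ^ (1 / p)) ^ 2 ≤
      (2 * r) ^ (2 - p) / (p - 1) *
        ∫ x, (Real.sign (f₁ x) * |f₁ x| ^ (p - 1) - Real.sign (f₂ x) * |f₂ x| ^ (p - 1)) *
          (f₁ x - f₂ x) ∂μ := by
  have hp0 : (0:ℝ) < p := by linarith
  have h2p : (0:ℝ) < 2 - p := by linarith
  set w : X → ℝ := fun x =>
    (Real.sign (f₁ x) * |f₁ x| ^ (p - 1) - Real.sign (f₂ x) * |f₂ x| ^ (p - 1)) *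
      (f₁ x - f₂ x) with hwdef
  set s : X → ℝ := fun x => |f₁ x| + |f₂ x| with hsdef
  set h : X → ℝ := fun x => s x ^ (p - 2) * (f₁ x - f₂ x) ^ 2 with hhdef
  have hs_nonneg : ∀ x, 0 ≤ s x := fun x => by positivity
  have hs_meas : Measurable s := hm1.abs.add hm2.abs
  have hh_meas : Measurable h := (hs_meas.pow_const (p-2)).mul ((hm1.sub hm2).pow_const 2)
  have hh_nonneg : ∀ x, 0 ≤ h x := fun x =>
    mul_nonneg (Real.rpow_nonneg (hs_nonneg x) _) (sq_nonneg _)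
  have hkey : ∀ x, (p - 1) * h x ≤ w x := fun x => by
    have := key hp1 hp2 (f₁ x) (f₂ x)
    simpa [hwdef, hhdef, hsdef, mul_assoc] using this
  have hw_nonneg : ∀ x, 0 ≤ w x := fun x =>
    le_trans (mul_nonneg (by linarith) (hh_nonneg x)) (hkey x)
  have hh_int : Integrable h μ := by
    refine Integrable.mono' (hiprod.div_const (p - 1)) hh_meas.aestronglyMeasurable ?_
    refine Filter.Eventually.of_forall fun x => ?_
    rw [Real.norm_eq_abs, abs_of_nonneg (hh_nonneg x), le_div_iff₀ (by linarith : (0:ℝ) < p - 1)]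
    have := hkey x; linarith
  have hH : (p - 1) * ∫ x, h x ∂μ ≤ ∫ x, w x ∂μ := by
    rw [← integral_const_mul]
    exact integral_mono (hh_int.const_mul _) hiprod fun x => hkey x
  have hH0 : 0 ≤ ∫ x, h x ∂μ := integral_nonneg hh_nonneg
  have hW0 : 0 ≤ ∫ x, w x ∂μ := integral_nonneg hw_nonneg
  have hsp_int : Integrable (fun x => s x ^ p) μ := by
    refine Integrable.mono' ((hi1.add hi2).const_mul (2 ^ (p - 1)))
      (hs_meas.pow_const p).aestronglyMeasurable ?_
    refine Filter.Eventually.of_forall fun x => ?_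
    rw [Real.norm_eq_abs, abs_of_nonneg (Real.rpow_nonneg (hs_nonneg x) _)]
    exact myrpow_two (abs_nonneg _) (abs_nonneg _) (by linarith)
  have hB0 : 0 ≤ ∫ x, s x ^ p ∂μ := integral_nonneg fun x => Real.rpow_nonneg (hs_nonneg x) _
  have hr0 : 0 ≤ r :=
    le_trans (Real.rpow_nonneg
      (integral_nonneg fun x => Real.rpow_nonneg (abs_nonneg _) _) _) hr1
  have hRle : ∀ (f : X → ℝ), (∫ x, |f x| ^ p ∂μ) ^ (1 / p) ≤ r →
      ∫ x, |f x| ^ p ∂μ ≤ r ^ p := fun f hf => by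
    have h0 : 0 ≤ ∫ x, |f x| ^ p ∂μ := integral_nonneg fun x => Real.rpow_nonneg (abs_nonneg _) _
    have := Real.rpow_le_rpow (Real.rpow_nonneg h0 _) hf hp0.le
    rwa [← Real.rpow_mul h0, one_div, inv_mul_cancel₀ (ne_of_gt hp0), Real.rpow_one] at this
  have hB : ∫ x, s x ^ p ∂μ ≤ (2 * r) ^ p := by
    have h2 : (0:ℝ) ≤ 2 ^ (p - 1) := Real.rpow_nonneg (by norm_num) _
    calc ∫ x, s x ^ p ∂μ
        ≤ ∫ x, 2 ^ (p - 1) * (|f₁ x| ^ p + |f₂ x| ^ p) ∂μ :=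
          integral_mono hsp_int ((hi1.add hi2).const_mul _)
            (fun x => myrpow_two (abs_nonneg _) (abs_nonneg _) (by linarith))
      _ = 2 ^ (p - 1) * ((∫ x, |f₁ x| ^ p ∂μ) + ∫ x, |f₂ x| ^ p ∂μ) := by
          rw [integral_const_mul, integral_add hi1 hi2]
      _ ≤ 2 ^ (p - 1) * (r ^ p + r ^ p) :=
          mul_le_mul_of_nonneg_left (add_le_add (hRle f₁ hr1) (hRle f₂ hr2)) h2
      _ = (2 ^ (p - 1) * 2) * r ^ p := by ring
      _ = (2 * r) ^ p := by
          rw [Real.mul_rpow (by norm_num) hr0, ← Real.rpow_add_one (two_ne_zero) (p - 1)]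
          norm_num
  -- Hölder
  have hpq : Real.HolderConjugate (2 / p) (2 / (2 - p)) := by
    rw [Real.holderConjugate_iff]
    constructor
    · exact (one_lt_div hp0).2 hp2
    · rw [show (2 / p : ℝ)⁻¹ = p / 2 by field_simp, show (2 / (2 - p) : ℝ)⁻¹ = (2 - p) / 2 by
        field_simp]
      ring
  set F : X → ℝ := fun x => h x ^ (p / 2) with hFdef
  set G : X → ℝ := fun x => (s x ^ p) ^ ((2 - p) / 2) with hGdef
  have hq2p : (ENNReal.ofReal (2 / p)) ≠ 0 := by
    rw [Ne, ENNReal.ofReal_eq_zero, not_le]; exact div_pos (by norm_num) hp0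
  have hq2p' : (ENNReal.ofReal (2 / (2 - p))) ≠ 0 := by
    rw [Ne, ENNReal.ofReal_eq_zero, not_le]; exact div_pos (by norm_num) h2p
  have hFm : MemLp F (ENNReal.ofReal (2 / p)) μ := by
    have e : (fun x => ‖F x‖ ^ (ENNReal.ofReal (2 / p)).toReal) = h := by
      funext x
      rw [ENNReal.toReal_ofReal (div_nonneg (by norm_num) hp0.le), Real.norm_eq_abs,
        abs_of_nonneg (Real.rpow_nonneg (hh_nonneg x) _), ← Real.rpow_mul (hh_nonneg x),
        show p / 2 * (2 / p) = 1 by field_simp, Real.rpow_one]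
    have H1 : MemLp (fun x => ‖F x‖ ^ (ENNReal.ofReal (2 / p)).toReal)
        (ENNReal.ofReal (2 / p) / ENNReal.ofReal (2 / p)) μ := by
      rw [ENNReal.div_self hq2p (by simp), e]
      exact memLp_one_iff_integrable.2 hh_int
    exact (memLp_norm_rpow_iff (hh_meas.pow_const (p/2)).aestronglyMeasurable hq2p (by simp)).1 H1
  have hGm : MemLp G (ENNReal.ofReal (2 / (2 - p))) μ := by
    have e : (fun x => ‖G x‖ ^ (ENNReal.ofReal (2 / (2 - p))).toReal) = fun x => s x ^ p := by
      funext x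
      rw [ENNReal.toReal_ofReal (div_nonneg (by norm_num) h2p.le), Real.norm_eq_abs,
        abs_of_nonneg (Real.rpow_nonneg (Real.rpow_nonneg (hs_nonneg x) _) _),
        ← Real.rpow_mul (Real.rpow_nonneg (hs_nonneg x) _),
        show (2 - p) / 2 * (2 / (2 - p)) = 1 by field_simp, Real.rpow_one]
    have H1 : MemLp (fun x => ‖G x‖ ^ (ENNReal.ofReal (2 / (2 - p))).toReal)
        (ENNReal.ofReal (2 / (2 - p)) / ENNReal.ofReal (2 / (2 - p))) μ := by
      rw [ENNReal.div_self hq2p' (by simp), e]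
      exact memLp_one_iff_integrable.2 hsp_int
    exact (memLp_norm_rpow_iff ((hs_meas.pow_const p).pow_const ((2-p)/2)).aestronglyMeasurable hq2p'
      (by simp)).1 H1
  have hholder := integral_mul_le_Lp_mul_Lq_of_nonneg hpq
    (Filter.Eventually.of_forall fun x => Real.rpow_nonneg (hh_nonneg x) _)
    (Filter.Eventually.of_forall fun x => Real.rpow_nonneg (Real.rpow_nonneg (hs_nonneg x) _) _)
    hFm hGm
  have eFG : ∀ x, F x * G x = |f₁ x - f₂ x| ^ p := by
    intro x
    rcases (hs_nonneg x).eq_or_lt with h0 | hpos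
    · have h0' : |f₁ x| + |f₂ x| = 0 := h0.symm
      have h1 : |f₁ x| = 0 := by nlinarith [abs_nonneg (f₁ x), abs_nonneg (f₂ x), h0']
      have h2 : |f₂ x| = 0 := by nlinarith [abs_nonneg (f₁ x), abs_nonneg (f₂ x), h0']
      have e1 : f₁ x = 0 := abs_eq_zero.1 h1
      have e2 : f₂ x = 0 := abs_eq_zero.1 h2
      simp [hFdef, hGdef, hhdef, hsdef, e1, e2, Real.zero_rpow (ne_of_gt hp0),
        Real.zero_rpow (by positivity : p / 2 ≠ 0)]
    · have hsne : s x ≠ 0 := ne_of_gt hpos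
      have e1 : F x = (s x ^ (p - 2)) ^ (p / 2) * |f₁ x - f₂ x| ^ p := by
        rw [hFdef]
        dsimp only
        rw [Real.mul_rpow (Real.rpow_nonneg (hs_nonneg x) _) (sq_nonneg _), ← sq_abs,
          ← Real.rpow_natCast |f₁ x - f₂ x| 2, ← Real.rpow_mul (abs_nonneg _),
          show ((2:ℕ):ℝ) * (p / 2) = p by push_cast; ring]
      rw [e1, hGdef]
      dsimp only
      rw [← Real.rpow_mul (hs_nonneg x), ← Real.rpow_mul (hs_nonneg x),
        show (p - 2) * (p / 2) = -(p * ((2 - p) / 2)) by ring, Real.rpow_neg (hs_nonneg x)]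
      field_simp
  have eF : ∀ x, F x ^ (2 / p) = h x := fun x => by
    rw [hFdef]; dsimp only
    rw [← Real.rpow_mul (hh_nonneg x), show p / 2 * (2 / p) = 1 by field_simp, Real.rpow_one]
  have eG : ∀ x, G x ^ (2 / (2 - p)) = s x ^ p := fun x => by
    rw [hGdef]; dsimp only
    rw [← Real.rpow_mul (Real.rpow_nonneg (hs_nonneg x) _),
      show (2 - p) / 2 * (2 / (2 - p)) = 1 by field_simp, Real.rpow_one]
  have hI : ∫ x, |f₁ x - f₂ x| ^ p ∂μ ≤
      (∫ x, h x ∂μ) ^ (p / 2) * (∫ x, s x ^ p ∂μ) ^ ((2 - p) / 2) := by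
    have e1 : ∫ a, F a * G a ∂μ = ∫ x, |f₁ x - f₂ x| ^ p ∂μ :=
      integral_congr_ae (Filter.Eventually.of_forall eFG)
    have e2 : ∫ a, F a ^ (2 / p) ∂μ = ∫ x, h x ∂μ :=
      integral_congr_ae (Filter.Eventually.of_forall eF)
    have e3 : ∫ a, G a ^ (2 / (2 - p)) ∂μ = ∫ x, s x ^ p ∂μ :=
      integral_congr_ae (Filter.Eventually.of_forall eG)
    rw [e1, e2, e3, one_div_div, one_div_div] at hholder
    exact hholder
  have hIn0 : 0 ≤ ∫ x, |f₁ x - f₂ x| ^ p ∂μ :=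
    integral_nonneg fun x => Real.rpow_nonneg (abs_nonneg _) _
  have step0 : ((∫ x, |f₁ x - f₂ x| ^ p ∂μ) ^ (1 / p)) ^ 2 =
      (∫ x, |f₁ x - f₂ x| ^ p ∂μ) ^ (2 / p) := by
    rw [← Real.rpow_natCast ((∫ x, |f₁ x - f₂ x| ^ p ∂μ) ^ (1 / p)) 2,
      ← Real.rpow_mul hIn0]
    congr 1
    push_cast
    ring
  have step1 : (∫ x, |f₁ x - f₂ x| ^ p ∂μ) ^ (2 / p) ≤
      ((∫ x, h x ∂μ) ^ (p / 2) * (∫ x, s x ^ p ∂μ) ^ ((2 - p) / 2)) ^ (2 / p) :=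
    Real.rpow_le_rpow hIn0 hI (div_nonneg (by norm_num) hp0.le)
  have step2 : ((∫ x, h x ∂μ) ^ (p / 2) * (∫ x, s x ^ p ∂μ) ^ ((2 - p) / 2)) ^ (2 / p) =
      (∫ x, h x ∂μ) * (∫ x, s x ^ p ∂μ) ^ ((2 - p) / p) := by
    rw [Real.mul_rpow (Real.rpow_nonneg hH0 _) (Real.rpow_nonneg hB0 _),
      ← Real.rpow_mul hH0, ← Real.rpow_mul hB0,
      show p / 2 * (2 / p) = 1 by field_simp, Real.rpow_one,
      show (2 - p) / 2 * (2 / p) = (2 - p) / p by field_simp]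
  have step3 : (∫ x, h x ∂μ) * (∫ x, s x ^ p ∂μ) ^ ((2 - p) / p) ≤
      ((∫ x, w x ∂μ) / (p - 1)) * (2 * r) ^ (2 - p) := by
    apply mul_le_mul
    · rw [le_div_iff₀ (by linarith : (0:ℝ) < p - 1)]; linarith
    · calc (∫ x, s x ^ p ∂μ) ^ ((2 - p) / p)
          ≤ ((2 * r) ^ p) ^ ((2 - p) / p) :=
            Real.rpow_le_rpow hB0 hB (div_nonneg h2p.le hp0.le)
        _ = (2 * r) ^ (2 - p) := by
            rw [← Real.rpow_mul (mul_nonneg (by norm_num) hr0)]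
            congr 1; field_simp
    · exact Real.rpow_nonneg hB0 _
    · exact div_nonneg hW0 (by linarith)
  calc ((∫ x, |f₁ x - f₂ x| ^ p ∂μ) ^ (1 / p)) ^ 2
      = (∫ x, |f₁ x - f₂ x| ^ p ∂μ) ^ (2 / p) := step0
    _ ≤ ((∫ x, h x ∂μ) ^ (p / 2) * (∫ x, s x ^ p ∂μ) ^ ((2 - p) / 2)) ^ (2 / p) := step1
    _ = (∫ x, h x ∂μ) * (∫ x, s x ^ p ∂μ) ^ ((2 - p) / p) := step2
    _ ≤ ((∫ x, w x ∂μ) / (p - 1)) * (2 * r) ^ (2 - p) := step3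
    _ = (2 * r) ^ (2 - p) / (p - 1) * ∫ x, w x ∂μ := by ring
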